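/- arXiv:0801.0232 — 3 statements merged into one kernel-verified Lean document; each statement's English description precedes it below -/
import Mathlib

section
/- If an entity has a deterministic environment, is non-contradictory, and there exist two times a < b in its lifetime at which the observer perceives the same pair of states (entity state and environment state), then the perceived entity and environment states are periodic with period b - a from time a onward; in particular the entity's perceived state never becomes 0 after time a, so the entity's lifetime is infinite. -/
/-- If an entity is non-contradictory, has a deterministic environment, and the observer
perceives the same pair of states at two times `a < b` in its lifetime, then the perceived
states are periodic with period `b - a` from `a` onward; in particular the entity's perceived
state never becomes `0` after time `a`, so the lifetime is infinite. -/
theorem stmt_0 {S Pent Penv : Type*} [Fintype Pent] [Fintype Penv]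
    (s : ℕ → S) (ps_ent : S → Pent) (ps_ENV : S → Penv) (z : Pent)
    (t a b : ℕ) (hta : t ≤ a) (hab : a < b)
    (halive : ∀ τ, t ≤ τ → τ ≤ b → ps_ent (s τ) ≠ z)
    (hnc : ∀ τ₁ τ₂, t ≤ τ₁ → t ≤ τ₂ → ps_ent (s τ₁) ≠ z → ps_ent (s τ₂) ≠ z →
      (ps_ent (s τ₁), ps_ENV (s τ₁)) = (ps_ent (s τ₂), ps_ENV (s τ₂)) →
      ps_ent (s (τ₁ + 1)) = ps_ent (s (τ₂ + 1)))
    (hdet : ∀ τ₁ τ₂, t ≤ τ₁ → t ≤ τ₂ → ps_ent (s τ₁) ≠ z → ps_ent (s τ₂) ≠ z →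
      (ps_ent (s τ₁), ps_ENV (s τ₁)) = (ps_ent (s τ₂), ps_ENV (s τ₂)) →
      ps_ENV (s (τ₁ + 1)) = ps_ENV (s (τ₂ + 1)))
    (heq : (ps_ent (s a), ps_ENV (s a)) = (ps_ent (s b), ps_ENV (s b))) :
    (∀ τ, a ≤ τ →
      (ps_ent (s (τ + (b - a))), ps_ENV (s (τ + (b - a)))) = (ps_ent (s τ), ps_ENV (s τ))) ∧
    (∀ τ, a ≤ τ → ps_ent (s τ) ≠ z) ∧
    (∀ τ, t ≤ τ → ps_ent (s τ) ≠ z) := by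

  set d := b - a with hd_def
  have hd : 0 < d := by omega
  have hb : a + d = b := by omega
  have key : ∀ n, ps_ent (s (a + n)) ≠ z ∧
      (ps_ent (s (a + n + d)), ps_ENV (s (a + n + d))) =
        (ps_ent (s (a + n)), ps_ENV (s (a + n))) := by
    intro n
    induction n using Nat.strong_induction_on with
    | _ n ih =>
      have halive' : ps_ent (s (a + n)) ≠ z := by
        rcases le_or_gt (a + n) b with h | h
        · exact halive _ (le_trans hta (Nat.le_add_right a n)) h
        · have hdn : d ≤ n := by omega
          obtain ⟨hal, hpair⟩ := ih (n - d) (by omega)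
          have e : a + (n - d) + d = a + n := by omega
          rw [e] at hpair
          have h1 := (Prod.mk.injEq _ _ _ _).mp hpair
          rw [h1.1]
          exact hal
      refine ⟨halive', ?_⟩
      cases n with
      | zero =>
        simp only [Nat.add_zero]
        rw [hb]
        exact heq.symm
      | succ m =>
        obtain ⟨hm_alive, hm_pair⟩ := ih m (Nat.lt_succ_self m)
        have halive_d : ps_ent (s (a + m + d)) ≠ z := by
          have h1 := (Prod.mk.injEq _ _ _ _).mp hm_pair
          rw [h1.1]
          exact hm_alive
        have h1 := hnc (a + m + d) (a + m) (by omega) (by omega) halive_d hm_alive hm_pair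
        have h2 := hdet (a + m + d) (a + m) (by omega) (by omega) halive_d hm_alive hm_pair
        have e1 : a + m + d + 1 = a + (m + 1) + d := by omega
        have e2 : a + m + 1 = a + (m + 1) := by omega
        rw [e1, e2] at h1 h2
        exact congrArg₂ Prod.mk h1 h2
  refine ⟨?_, ?_, ?_⟩
  · intro τ hτ
    obtain ⟨n, rfl⟩ := Nat.exists_eq_add_of_le hτ
    exact (key n).2
  · intro τ hτ
    obtain ⟨n, rfl⟩ := Nat.exists_eq_add_of_le hτ
    exact (key n).1
  · intro τ hτ
    rcases le_or_gt τ b with h | h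
    · exact halive _ hτ h
    · obtain ⟨n, rfl⟩ := Nat.exists_eq_add_of_le (show a ≤ τ by omega)
      exact (key n).1
end

section
/- Any entity with a finite lifetime and a deterministic environment whose intelligence (lifetime length minus one) is strictly greater than |P_ent| · |P_ENV| must be contradictory. -/
/-- Any entity with a finite lifetime `{t, ..., t+q}` and a deterministic environment whose
intelligence `q` is strictly greater than `|P_ent| * |P_ENV|` must be contradictory. -/
theorem stmt_1 {S Pent Penv : Type*} [Fintype Pent] [Fintype Penv]
    (s : ℕ → S) (ps_ent : S → Pent) (ps_ENV : S → Penv) (z : Pent)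
    (t q : ℕ)
    (halive : ∀ τ, τ ≤ q → ps_ent (s (t + τ)) ≠ z)
    (hend : ps_ent (s (t + q + 1)) = z)
    (hdet : ∀ a b, a ≤ q → b ≤ q →
      (ps_ent (s (t + a)), ps_ENV (s (t + a))) = (ps_ent (s (t + b)), ps_ENV (s (t + b))) →
      ps_ENV (s (t + a + 1)) = ps_ENV (s (t + b + 1)))
    (hint : Fintype.card Pent * Fintype.card Penv < q) :
    ∃ a b, a ≤ q ∧ b ≤ q ∧
      (ps_ent (s (t + a)), ps_ENV (s (t + a))) = (ps_ent (s (t + b)), ps_ENV (s (t + b))) ∧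
      ps_ent (s (t + a + 1)) ≠ ps_ent (s (t + b + 1)) := by
  by_contra hc
  push_neg at hc
  -- pigeonhole on pairs
  set f : Fin (q + 1) → Pent × Penv :=
    fun i => (ps_ent (s (t + i)), ps_ENV (s (t + i))) with hf
  have hcard : Fintype.card (Pent × Penv) < Fintype.card (Fin (q + 1)) := by
    simp [Fintype.card_prod]
    omega
  obtain ⟨i, j, hij, hfij⟩ := Fintype.exists_ne_map_eq_of_card_lt f hcard
  obtain ⟨a, b, hab, hfab⟩ : ∃ a b : Fin (q + 1), a.val < b.val ∧ f a = f b := by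
    rcases lt_or_gt_of_ne hij with h | h
    · exact ⟨i, j, h, hfij⟩
    · exact ⟨j, i, h, hfij.symm⟩
  set A := a.val with hA
  set B := b.val with hB
  have haq : A ≤ q := Nat.lt_succ_iff.mp a.isLt
  have hbq : B ≤ q := Nat.lt_succ_iff.mp b.isLt
  have key : ∀ k, B + k ≤ q →
      (ps_ent (s (t + (A + k))), ps_ENV (s (t + (A + k)))) =
      (ps_ent (s (t + (B + k))), ps_ENV (s (t + (B + k)))) := by
    intro k
    induction k with
    | zero =>
      intro _
      simpa [hf] using hfab
    | succ k ih =>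
      intro hk
      have hk' : B + k ≤ q := by omega
      have hp := ih hk'
      have h1 : A + k ≤ q := by omega
      have hent := hc (A + k) (B + k) h1 hk' hp
      have henv := hdet (A + k) (B + k) h1 hk' hp
      have e1 : t + (A + (k + 1)) = t + (A + k) + 1 := by omega
      have e2 : t + (B + (k + 1)) = t + (B + k) + 1 := by omega
      rw [e1, e2, hent, henv]
  have hfin := key (q - B) (by omega)
  have h1 : A + (q - B) ≤ q := by omega
  have hent := hc (A + (q - B)) (B + (q - B)) h1 (by omega) hfin
  have e2 : B + (q - B) = q := by omega
  rw [e2] at hent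
  rw [hend] at hent
  exact halive (A + (q - B) + 1) (by omega) hent
end

section
/- If a non-contradictory entity in a deterministic environment has a finite lifetime {t, ..., t+q} with q ≥ 1, then the map τ ↦ (ps_ent(s_{t+τ}), ps_ENV(s_{t+τ})) is injective on {0, 1, ..., q}; consequently q + 1 ≤ |P_ent| · |P_ENV|. -/
/-- A non-contradictory entity in a deterministic environment with finite lifetime
`{t, ..., t+q}` (`q ≥ 1`) has an injective perceived-pair map on `{0, ..., q}`;
consequently `q + 1 ≤ |P_ent| * |P_ENV|`. -/
theorem stmt_5 {S Pent Penv : Type*} [Fintype Pent] [Fintype Penv]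
    (s : ℕ → S) (ps_ent : S → Pent) (ps_ENV : S → Penv) (z : Pent)
    (t q : ℕ) (hq : 1 ≤ q)
    (halive : ∀ τ, τ ≤ q → ps_ent (s (t + τ)) ≠ z)
    (hend : ps_ent (s (t + q + 1)) = z)
    (hnc : ∀ a b, a ≤ q → b ≤ q →
      (ps_ent (s (t + a)), ps_ENV (s (t + a))) = (ps_ent (s (t + b)), ps_ENV (s (t + b))) →
      ps_ent (s (t + a + 1)) = ps_ent (s (t + b + 1)))
    (hdet : ∀ a b, a ≤ q → b ≤ q →
      (ps_ent (s (t + a)), ps_ENV (s (t + a))) = (ps_ent (s (t + b)), ps_ENV (s (t + b))) →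
      ps_ENV (s (t + a + 1)) = ps_ENV (s (t + b + 1))) :
    Set.InjOn (fun τ => (ps_ent (s (t + τ)), ps_ENV (s (t + τ)))) {τ : ℕ | τ ≤ q} ∧
    q + 1 ≤ Fintype.card Pent * Fintype.card Penv := by
  set pair : ℕ → Pent × Penv := fun τ => (ps_ent (s (t + τ)), ps_ENV (s (t + τ))) with hpair
  have key : ∀ a b, a ≤ q → b ≤ q → a < b → pair a = pair b → False := by
    intro a b ha hb hab heq
    have prop : ∀ k, k ≤ q - b → pair (a + k) = pair (b + k) := by
      intro k hk
      induction k with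
      | zero => simpa using heq
      | succ n ih =>
        have hn : n ≤ q - b := Nat.le_of_succ_le hk
        have h1 := ih hn
        have ha' : a + n ≤ q := by omega
        have hb' : b + n ≤ q := by omega
        have he := hnc (a + n) (b + n) ha' hb' h1
        have hv := hdet (a + n) (b + n) ha' hb' h1
        simp only [hpair, Prod.mk.injEq]
        constructor
        · simpa [Nat.add_assoc] using he
        · simpa [Nat.add_assoc] using hv
    have hfin := prop (q - b) le_rfl
    have hbq : b + (q - b) = q := by omega
    rw [hbq] at hfin
    have ha' : a + (q - b) ≤ q := by omega
    have he := hnc (a + (q - b)) q ha' le_rfl hfin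
    rw [hend] at he
    exact halive (a + (q - b) + 1) (by omega) (by simpa [Nat.add_assoc] using he)
  have hinj : Set.InjOn pair {τ : ℕ | τ ≤ q} := by
    intro x hx y hy hxy
    by_contra hne
    rcases Nat.lt_or_ge x y with h | h
    · exact key x y hx hy h hxy
    · exact key y x hy hx (lt_of_le_of_ne h (Ne.symm hne)) hxy.symm
  refine ⟨hinj, ?_⟩
  have := Finset.card_le_card_of_injOn pair
    (fun a _ => Finset.mem_univ (pair a))
    (fun x hx y hy => hinj (by simpa using Finset.mem_range_succ_iff.mp hx)
      (by simpa using Finset.mem_range_succ_iff.mp hy))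
    (s := Finset.range (q + 1)) (t := Finset.univ)
  simpa [Fintype.card_prod] using this
end
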